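/- Let X be a nonempty set and Y a nonempty subset of X. The monoid T̄(X,Y) is unit-regular (i.e. every element is unit-regular) if and only if both of the following hold: (i) Y is a singleton or Y = X; (ii) X is finite. -/

import Mathlib

/-- An element `s` of a monoid is unit-regular if `s * u * s = s` for some unit `u`. -/
def IsUnitRegular {M : Type*} [Monoid M] (s : M) : Prop :=
  ∃ u : Mˣ, s * (↑u : M) * s = s

/-- The monoid `T̄(X, Y)` of all self-maps of `X` leaving `Y` invariant. -/
def Tbar (X : Type*) (Y : Set X) : Submonoid (Function.End X) where
  carrier := {f | ∀ x ∈ Y, f x ∈ Y}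
  one_mem' := fun x hx => hx
  mul_mem' := fun {f g} hf hg x hx => hf _ (hg x hx)

/-- An injective non-surjective self-map of an infinite type. -/
lemma aux_exists_inj_not_surj (α : Type*) [Infinite α] :
    ∃ g : α → α, Function.Injective g ∧ ¬ Function.Surjective g := by
  classical
  let e := Infinite.natEmbedding α
  refine ⟨fun x => if h : ∃ n, e n = x then e (h.choose + 1) else x, ?_, ?_⟩
  · intro x₁ x₂ hx
    by_cases h₁ : ∃ n, e n = x₁ <;> by_cases h₂ : ∃ n, e n = x₂ <;>
      simp only [h₁, h₂, dif_pos, dif_neg, not_false_iff] at hx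
    · have h3 : h₁.choose = h₂.choose := Nat.succ_injective (e.injective hx)
      rw [← h₁.choose_spec, ← h₂.choose_spec, h3]
    · exact absurd ⟨_, hx⟩ h₂
    · exact absurd ⟨_, hx.symm⟩ h₁
    · exact hx
  · intro hs
    obtain ⟨x, hx⟩ := hs (e 0)
    by_cases h : ∃ n, e n = x <;> simp only [h, dif_pos, dif_neg, not_false_iff] at hx
    · exact Nat.succ_ne_zero _ (e.injective hx)
    · exact h ⟨0, hx.symm⟩

/-- An injective non-surjective element of a monoid of transformations is not unit-regular. -/
lemma aux_inj_not_surj_not_unitreg {X : Type*} (Y : Set X) (s : Tbar X Y)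
    (hinj : Function.Injective (s : Function.End X))
    (hsur : ¬ Function.Surjective (s : Function.End X)) : ¬ IsUnitRegular s := by
  rintro ⟨u, hu⟩
  set f : Function.End X := (s : Function.End X) with hf
  set v : Function.End X := ((u : Tbar X Y) : Function.End X) with hv
  set w : Function.End X := (((u⁻¹ : (Tbar X Y)ˣ) : Tbar X Y) : Function.End X) with hw
  have hvw : ∀ x, v (w x) = x := by
    intro x
    have h1 : ((u : Tbar X Y) * ((u⁻¹ : (Tbar X Y)ˣ) : Tbar X Y)) = 1 := by
      exact_mod_cast u.mul_inv
    have := congrArg (fun g : Tbar X Y => (g : Function.End X) x) h1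
    exact this
  have hwv : ∀ x, w (v x) = x := by
    intro x
    have h1 : (((u⁻¹ : (Tbar X Y)ˣ) : Tbar X Y) * (u : Tbar X Y)) = 1 := by
      exact_mod_cast u.inv_mul
    have := congrArg (fun g : Tbar X Y => (g : Function.End X) x) h1
    exact this
  have hvinj : Function.Injective v := fun a b hab => by
    have := congrArg w hab; rwa [hwv, hwv] at this
  have heval : ∀ x, f (v (f x)) = f x := by
    intro x
    have := congrArg (fun g : Tbar X Y => (g : Function.End X) x) hu
    exact this
  have hvf : ∀ x, v (f x) = x := fun x => hinj (heval x)
  -- hence f = w, which is surjective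
  have hfw : ∀ x, f x = w x := by
    intro x
    apply hvinj
    rw [hvf, hvw]
  apply hsur
  intro x
  exact ⟨v x, by rw [hfw, hwv]⟩

/-- From an infinite invariant-ish set, an injective non-surjective self-map of `X`
fixing the complement. -/
lemma aux_shift {X : Type*} (S : Set X) (hS : S.Infinite) :
    ∃ s : X → X, Function.Injective s ∧ ¬ Function.Surjective s ∧
      (∀ x ∈ S, s x ∈ S) ∧ (∀ x ∉ S, s x = x) := by
  classical
  haveI : Infinite S := hS.to_subtype
  obtain ⟨g, hginj, hgsur⟩ := aux_exists_inj_not_surj S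
  refine ⟨fun x => if h : x ∈ S then (g ⟨x, h⟩ : X) else x, ?_, ?_, ?_, ?_⟩
  · intro x₁ x₂ hx
    by_cases h₁ : x₁ ∈ S <;> by_cases h₂ : x₂ ∈ S <;>
      simp only [h₁, h₂, dif_pos, dif_neg, not_false_iff] at hx
    · exact congrArg Subtype.val (hginj (Subtype.ext hx))
    · exact absurd (hx ▸ (g ⟨x₁, h₁⟩).2) h₂
    · exact absurd (hx.symm ▸ (g ⟨x₂, h₂⟩).2) h₁
    · exact hx
  · intro hsur
    obtain ⟨y, hy⟩ := not_forall.mp hgsur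
    rw [not_exists] at hy
    obtain ⟨x, hx⟩ := hsur (y : X)
    by_cases h : x ∈ S <;> simp only [h, dif_pos, dif_neg, not_false_iff] at hx
    · exact hy ⟨x, h⟩ (Subtype.ext hx)
    · exact h (hx ▸ y.2)
  · intro x hx; simp only [hx, dif_pos]; exact (g ⟨x, hx⟩).2
  · intro x hx; simp only [hx, dif_neg, not_false_iff]

theorem stmt3 {X : Type*} [Nonempty X] (Y : Set X) (hY : Y.Nonempty) :
    (∀ f : Tbar X Y, IsUnitRegular f) ↔
      (((∃ a, Y = {a}) ∨ Y = Set.univ) ∧ Finite X) := by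
  classical
  constructor
  · intro h
    constructor
    · -- Y is a singleton or Y = univ
      by_contra hcon
      push_neg at hcon
      obtain ⟨hsing, huniv⟩ := hcon
      obtain ⟨a, ha⟩ := hY
      obtain ⟨b, hb, hab⟩ : ∃ b ∈ Y, b ≠ a := by
        by_contra hb
        push_neg at hb
        exact hsing a (Set.eq_singleton_iff_unique_mem.mpr ⟨ha, hb⟩)
      obtain ⟨c, hc⟩ : ∃ c, c ∉ Y := by
        by_contra hc
        push_neg at hc
        exact huniv (Set.eq_univ_of_forall hc)
      -- the bad element
      set f0 : X → X := fun x => if x = b then a else if x = c then b else x with hf0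
      have hf0mem : f0 ∈ Tbar X Y := by
        intro x hx
        by_cases h1 : x = b
        · subst h1; simpa [hf0] using ha
        · have h2 : x ≠ c := fun hxc => hc (hxc ▸ hx)
          simpa only [hf0, h1, h2, if_neg, not_false_iff] using hx
      obtain ⟨u, hu⟩ := h ⟨f0, hf0mem⟩
      have heval : ∀ x, f0 (((u : Tbar X Y) : Function.End X) (f0 x)) = f0 x := by
        intro x
        exact congrArg (fun g : Tbar X Y => (g : Function.End X) x) hu
      have hcb : f0 c = b := by
        have hcb' : c ≠ b := fun hcb => hc (hcb ▸ hb)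
        simp [hf0, hcb']
      have hy : ((u : Tbar X Y) : Function.End X) b ∈ Y :=
        (u : Tbar X Y).2 b hb
      have hyb : f0 (((u : Tbar X Y) : Function.End X) b) = b := by
        have := heval c
        rwa [hcb] at this
      set y := ((u : Tbar X Y) : Function.End X) b with hyd
      have hyc : y ≠ c := fun hyc => hc (hyc ▸ hy)
      by_cases h1 : y = b
      · rw [h1] at hyb
        simp only [hf0, if_pos] at hyb
        exact hab hyb.symm
      · simp only [hf0, h1, hyc, if_neg, not_false_iff] at hyb
    · -- X is finite
      by_contra hfin
      haveI : Infinite X := not_finite_iff_infinite.mp hfin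
      have hcase : Y.Infinite ∨ (Yᶜ).Infinite := by
        by_contra hcc
        push_neg at hcc
        obtain ⟨h1, h2⟩ := hcc
        have : (Set.univ : Set X).Finite := by
          rw [← Set.union_compl_self Y]
          exact h1.union h2
        exact (Set.infinite_univ (α := X)) this
      rcases hcase with hYinf | hYcinf
      · obtain ⟨s, hinj, hsur, hmap, _⟩ := aux_shift Y hYinf
        have hmem : s ∈ Tbar X Y := hmap
        exact aux_inj_not_surj_not_unitreg Y ⟨s, hmem⟩ hinj hsur (h ⟨s, hmem⟩)
      · obtain ⟨s, hinj, hsur, _, hfix⟩ := aux_shift Yᶜ hYcinf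
        have hmem : s ∈ Tbar X Y := fun x hx => by
          rw [hfix x (by simpa using hx)]; exact hx
        exact aux_inj_not_surj_not_unitreg Y ⟨s, hmem⟩ hinj hsur (h ⟨s, hmem⟩)
  · rintro ⟨hor, hfin⟩ f
    obtain ⟨f0, hf0⟩ := f
    -- a section of f0 on its range
    rcases hor with ⟨a, ha⟩ | huniv
    · -- Y = {a}
      have hfa : f0 a = a := by
        have := hf0 a (ha ▸ rfl)
        rwa [ha, Set.mem_singleton_iff] at this
      set g : X → X := fun y => if y = a then a else Function.invFun f0 y with hg
      have hsec : ∀ y ∈ Set.range f0, f0 (g y) = y := by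
        intro y hy
        by_cases h1 : y = a
        · simp [hg, h1, hfa]
        · simp only [hg, h1, if_neg, not_false_iff]
          exact Function.invFun_eq hy
      have hinjOn : Set.InjOn g (Set.range f0) := by
        intro y₁ h₁ y₂ h₂ hgy
        rw [← hsec y₁ h₁, ← hsec y₂ h₂, hgy]
      set e := Equiv.Set.imageOfInjOn g (Set.range f0) hinjOn with he
      set σ := Equiv.extendSubtype e with hσ
      have hσeq : ∀ y ∈ Set.range f0, σ y = g y := by
        intro y hy
        rw [hσ, Equiv.extendSubtype_apply_of_mem e y hy]
        rfl
      have hσa : σ a = a := by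
        rw [hσeq a ⟨a, hfa⟩]
        simp [hg]
      have hσmem : (⇑σ : Function.End X) ∈ Tbar X Y := by
        intro x hx
        rw [ha, Set.mem_singleton_iff] at hx ⊢
        show σ x = a
        rw [hx, hσa]
      have hσsmem : (⇑σ.symm : Function.End X) ∈ Tbar X Y := by
        intro x hx
        rw [ha, Set.mem_singleton_iff] at hx ⊢
        show σ.symm x = a
        rw [hx]
        exact (Equiv.symm_apply_eq σ).mpr hσa.symm
      refine ⟨⟨⟨(⇑σ : Function.End X), hσmem⟩, ⟨(⇑σ.symm : Function.End X), hσsmem⟩,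
        Subtype.ext (funext fun x => σ.apply_symm_apply x),
        Subtype.ext (funext fun x => σ.symm_apply_apply x)⟩, ?_⟩
      apply Subtype.ext
      funext x
      show f0 (σ (f0 x)) = f0 x
      rw [hσeq (f0 x) ⟨x, rfl⟩, hsec (f0 x) ⟨x, rfl⟩]
    · -- Y = univ
      set g : X → X := Function.invFun f0 with hg
      have hsec : ∀ y ∈ Set.range f0, f0 (g y) = y := fun y hy => Function.invFun_eq hy
      have hinjOn : Set.InjOn g (Set.range f0) := by
        intro y₁ h₁ y₂ h₂ hgy
        rw [← hsec y₁ h₁, ← hsec y₂ h₂, hgy]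
      set e := Equiv.Set.imageOfInjOn g (Set.range f0) hinjOn with he
      set σ := Equiv.extendSubtype e with hσ
      have hσeq : ∀ y ∈ Set.range f0, σ y = g y := by
        intro y hy
        rw [hσ, Equiv.extendSubtype_apply_of_mem e y hy]
        rfl
      have hmem : ∀ h : X → X, h ∈ Tbar X Y := by
        intro h x hx
        rw [huniv]; trivial
      refine ⟨⟨⟨(⇑σ : Function.End X), hmem _⟩, ⟨(⇑σ.symm : Function.End X), hmem _⟩,
        Subtype.ext (funext fun x => σ.apply_symm_apply x),
        Subtype.ext (funext fun x => σ.symm_apply_apply x)⟩, ?_⟩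
      apply Subtype.ext
      funext x
      show f0 (σ (f0 x)) = f0 x
      rw [hσeq (f0 x) ⟨x, rfl⟩, hsec (f0 x) ⟨x, rfl⟩]
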